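/- arXiv:math/0604026 — 5 statements merged into one kernel-verified Lean document; each statement's English description precedes it below -/
import Mathlib

section
/- For every integer j ≥ 1 and every λ with 0 < λ < 1, one has ∫₀^λ t^{2j}/(1−t²)^{j+1} dt = (−1)^j ((1/2)_j/(2·j!)) · ln((1+λ)/(1−λ)) + (1/(2jλ)) · Σ_{n=0}^{j−1} (−1)^n ((1/2−j)_n/(1−j)_n) · (λ²/(1−λ²))^{j−n}. For j = 0 the identity reads ∫₀^λ dt/(1−t²) = (1/2)·ln((1+λ)/(1−λ)). -/
open Real Finset

noncomputable def poch (a : ℝ) (n : ℕ) : ℝ := ∏ i ∈ Finset.range n, (a + i)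

lemma poch_zero (a : ℝ) : poch a 0 = 1 := by simp [poch]

lemma poch_succ (a : ℝ) (n : ℕ) : poch a (n+1) = poch a n * (a + n) := by
  simp [poch, Finset.prod_range_succ]

lemma poch_succ' (a : ℝ) (n : ℕ) : poch a (n+1) = a * poch (a+1) n := by
  rw [poch, Finset.prod_range_succ']
  rw [mul_comm]
  congr 1
  · norm_num
  · apply Finset.prod_congr rfl
    intro i _
    push_cast; ring

lemma poch_neg_nat (j : ℕ) : poch (-(j:ℝ)) j = (-1)^j * (Nat.factorial j : ℝ) := by
  induction j with
  | zero => simp [poch]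
  | succ n ih =>
      rw [poch_succ']
      have : (-(↑(n+1):ℝ)) + 1 = -(n:ℝ) := by push_cast; ring
      rw [this, ih]
      push_cast [Nat.factorial_succ]
      ring

lemma poch_neg_half (j : ℕ) : poch (-(1/2) - (j:ℝ)) j = (-1)^j * 2 * poch (1/2) (j+1) := by
  induction j with
  | zero => simp [poch_succ, poch_zero]
  | succ n ih =>
      rw [poch_succ']
      have : (-(1/2) - (↑(n+1):ℝ)) + 1 = -(1/2) - (n:ℝ) := by push_cast; ring
      rw [this, ih, poch_succ (1/2 : ℝ) (n+1)]
      push_cast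
      ring

lemma poch_ne_zero (j n : ℕ) (h : n ≤ j) : poch (-(j:ℝ)) n ≠ 0 := by
  apply Finset.prod_ne_zero_iff.mpr
  intro i hi
  simp only [Finset.mem_range] at hi
  have : (i:ℝ) < (j:ℝ) := by exact_mod_cast lt_of_lt_of_le hi h
  intro hc
  linarith

noncomputable def dd (j n : ℕ) : ℝ :=
  (1/(2*(j:ℝ))) * (-1)^n * (poch (1/2 - (j:ℝ)) n / poch (1 - (j:ℝ)) n)

lemma one_sub_cast (j : ℕ) (hj : 1 ≤ j) : (1 : ℝ) - (j:ℝ) = -((j-1 : ℕ):ℝ) := by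
  push_cast [Nat.cast_sub hj]; ring

lemma poch_one_sub_ne_zero (j n : ℕ) (hj : 1 ≤ j) (h : n ≤ j - 1) :
    poch (1 - (j:ℝ)) n ≠ 0 := by
  rw [one_sub_cast j hj]; exact poch_ne_zero _ _ h

lemma dd_zero (j : ℕ) : dd j 0 = 1/(2*(j:ℝ)) := by simp [dd, poch_zero]

lemma dd_succ (j m : ℕ) (hj : 1 ≤ j) (h : m + 1 ≤ j - 1) :
    dd j (m+1) * ((1:ℝ) - j + m) = - (dd j m * (1/2 - (j:ℝ) + m)) := by
  have hq : poch (1 - (j:ℝ)) m ≠ 0 := poch_one_sub_ne_zero j m hj (by omega)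
  have hb : (1:ℝ) - j + m ≠ 0 := by
    have : (m:ℝ) + 2 ≤ j := by exact_mod_cast (by omega : m + 2 ≤ j)
    intro hc; linarith
  simp only [dd, poch_succ]
  field_simp
  ring

lemma key (j : ℕ) (hj : 1 ≤ j) :
    ∀ m, m ≤ j - 1 → ∀ x : ℝ,
      ∑ n ∈ range m, dd j n * x^(2*(j-n)-2) * ((2*(j:ℝ) - 2*n - 1) + x^2) * (1-x^2)^n
      = x^(2*j) - (2*(j:ℝ) - 2*m) * dd j m * x^(2*(j-m)) * (1-x^2)^m := by
  intro m
  induction m with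
  | zero =>
      intro _ x
      have hjj : (2*(j:ℝ)) ≠ 0 := by
        have : (1:ℝ) ≤ j := by exact_mod_cast hj
        positivity
      simp only [Finset.sum_range_zero, dd_zero, Nat.sub_zero, Nat.cast_zero]
      field_simp
      ring
  | succ m ih =>
      intro hm x
      rw [Finset.sum_range_succ, ih (by omega) x]
      have hdd := dd_succ j m hj hm
      obtain ⟨k, rfl⟩ : ∃ k, j = m + 2 + k := ⟨j - m - 2, by omega⟩
      simp only [show m+2+k-m = k+2 by omega, show m+2+k-(m+1) = k+1 by omega,
        show 2*(k+2)-2 = 2*k+2 by omega, show 2*(k+2) = 2*k+4 by omega,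
        show 2*(k+1) = 2*k+2 by omega]
      push_cast at hdd ⊢
      linear_combination (-2 * x^(2*k+2) * (1-x^2)^(m+1)) * hdd

lemma dd_last (j : ℕ) (hj : 1 ≤ j) :
    dd j (j-1) = (-1)^(j-1) * poch (1/2) j / (Nat.factorial j : ℝ) := by
  obtain ⟨i, rfl⟩ : ∃ i, j = i+1 := ⟨j-1, by omega⟩
  simp only [Nat.add_sub_cancel, dd]
  have h1 : (1/2 : ℝ) - (↑(i+1):ℝ) = -(1/2) - (i:ℝ) := by push_cast; ring
  have h2 : (1 : ℝ) - (↑(i+1):ℝ) = -(i:ℝ) := by push_cast; ring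
  rw [h1, h2, poch_neg_half, poch_neg_nat]
  have hne : ((-1:ℝ))^i ≠ 0 := by
    intro hc; have := pow_ne_zero i (by norm_num : (-1:ℝ) ≠ 0); exact this hc
  rw [show ((-1:ℝ)^i * 2 * poch (1/2) (i+1)) = (-1:ℝ)^i * (2*poch (1/2) (i+1)) from by ring,
    mul_div_mul_left _ _ hne, Nat.factorial_succ]
  have hF : ((Nat.factorial i : ℕ):ℝ) ≠ 0 := Nat.cast_ne_zero.mpr (Nat.factorial_ne_zero i)
  have hI : ((i:ℝ)+1) ≠ 0 := by positivity
  push_cast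
  field_simp

lemma key' (j : ℕ) (hj : 1 ≤ j) (x : ℝ) :
    ∑ n ∈ range j, dd j n * x^(2*(j-n)-2) * ((2*(j:ℝ) - 2*n - 1) + x^2) * (1-x^2)^n
    = x^(2*j) + dd j (j-1) * (1-x^2)^j := by
  obtain ⟨i, rfl⟩ : ∃ i, j = i+1 := ⟨j-1, by omega⟩
  rw [Finset.sum_range_succ, key (i+1) hj i (by omega) x]
  simp only [Nat.add_sub_cancel, show i+1-i = 1 by omega]
  norm_num
  ring

lemma hasDeriv_log_part (x : ℝ) (h1 : -1 < x) (h2 : x < 1) :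
    HasDerivAt (fun y : ℝ => Real.log (1+y) - Real.log (1-y)) (2/(1-x^2)) x := by
  have ha : HasDerivAt (fun y:ℝ => 1+y) 1 x := by simpa using (hasDerivAt_id x).const_add (1:ℝ)
  have hb : HasDerivAt (fun y:ℝ => 1-y) (-1) x := by simpa using (hasDerivAt_id x).const_sub (1:ℝ)
  have hla := (Real.hasDerivAt_log (by linarith : (1:ℝ)+x ≠ 0)).comp x ha
  have hlb := (Real.hasDerivAt_log (by linarith : (1:ℝ)-x ≠ 0)).comp x hb
  have h := hla.fun_sub hlb
  refine h.congr_deriv (Eq.symm ?_)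
  have hxa : (1:ℝ)+x ≠ 0 := by linarith
  have hxb : (1:ℝ)-x ≠ 0 := by linarith
  have hx2 : (1:ℝ)-x^2 ≠ 0 := by nlinarith
  field_simp
  ring

lemma hasDeriv_term (j n : ℕ) (hn : n < j) (x : ℝ) (hx : (1:ℝ) - x^2 ≠ 0) :
    HasDerivAt (fun y : ℝ => dd j n * (y^(2*(j-n)-1) / (1-y^2)^(j-n)))
      (dd j n * x^(2*(j-n)-2) * ((2*(j:ℝ) - 2*n - 1) + x^2) * (1-x^2)^n / (1-x^2)^(j+1)) x := by
  obtain ⟨k, rfl⟩ : ∃ k, j = n + 1 + k := ⟨j - n - 1, by omega⟩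
  simp only [show n+1+k-n = k+1 by omega, show 2*(k+1)-1 = 2*k+1 by omega,
    show 2*(k+1)-2 = 2*k by omega]
  have hnum : HasDerivAt (fun y:ℝ => y^(2*k+1)) ((2*k+1:ℕ)*x^(2*k)) x := by
    simpa [Nat.add_sub_cancel] using hasDerivAt_pow (2*k+1) x
  have hbase : HasDerivAt (fun y:ℝ => 1 - y^2) (-(2*x)) x := by
    simpa using (hasDerivAt_pow 2 x).const_sub (1:ℝ)
  have hden : HasDerivAt (fun y:ℝ => (1-y^2)^(k+1)) (((k+1:ℕ)) * (1-x^2)^k * (-(2*x))) x := by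
    simpa [Nat.add_sub_cancel] using hbase.fun_pow (k+1)
  have hq := (hnum.div hden (pow_ne_zero _ hx)).const_mul (dd (n+1+k) n)
  refine hq.congr_deriv (Eq.symm ?_)
  push_cast
  field_simp
  ring

lemma hasDerivG (j : ℕ) (hj : 1 ≤ j) (x : ℝ) (h1 : -1 < x) (h2 : x < 1) :
    HasDerivAt (fun y : ℝ =>
        (-1:ℝ)^j * (poch (1/2) j / (2 * (Nat.factorial j:ℝ))) *
          (Real.log (1+y) - Real.log (1-y))
        + ∑ n ∈ range j, dd j n * (y^(2*(j-n)-1) / (1-y^2)^(j-n)))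
      (x^(2*j) / (1-x^2)^(j+1)) x := by
  have hx : (1:ℝ) - x^2 ≠ 0 := by nlinarith
  set C : ℝ := (-1:ℝ)^j * (poch (1/2) j / (2 * (Nat.factorial j:ℝ))) with hC
  have hlog := (hasDeriv_log_part x h1 h2).const_mul C
  have hsum : HasDerivAt (fun y : ℝ => ∑ n ∈ range j, dd j n * (y^(2*(j-n)-1) / (1-y^2)^(j-n)))
      (∑ n ∈ range j, dd j n * x^(2*(j-n)-2) * ((2*(j:ℝ) - 2*n - 1) + x^2) * (1-x^2)^n / (1-x^2)^(j+1)) x := by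
    exact HasDerivAt.fun_sum fun n hn => hasDeriv_term j n (Finset.mem_range.mp hn) x hx
  have h := hlog.fun_add hsum
  refine h.congr_deriv (Eq.symm ?_)
  rw [← Finset.sum_div, key' j hj x]
  have hddC : dd j (j-1) = -2 * C := by
    rw [dd_last j hj, hC]
    obtain ⟨i, rfl⟩ : ∃ i, j = i+1 := ⟨j-1, by omega⟩
    simp only [Nat.add_sub_cancel, pow_succ]
    have : ((Nat.factorial (i+1) : ℕ):ℝ) ≠ 0 := Nat.cast_ne_zero.mpr (Nat.factorial_ne_zero _)
    field_simp
  rw [hddC, pow_succ]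
  have hxj : ((1:ℝ)-x^2)^j ≠ 0 := pow_ne_zero _ hx
  field_simp
  ring


theorem stmt0 (j : ℕ) (hj : 1 ≤ j) (l : ℝ) (hl0 : 0 < l) (hl1 : l < 1) :
    ((∫ t in (0:ℝ)..l, t ^ (2 * j) / (1 - t ^ 2) ^ (j + 1)) =
      (-1 : ℝ) ^ j * (poch (1/2) j / (2 * (Nat.factorial j : ℝ))) *
        Real.log ((1 + l) / (1 - l))
      + (1 / (2 * (j : ℝ) * l)) *
          ∑ n ∈ Finset.range j,
            (-1 : ℝ) ^ n * (poch (1/2 - (j : ℝ)) n / poch (1 - (j : ℝ)) n) *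
              (l ^ 2 / (1 - l ^ 2)) ^ (j - n))
    ∧ (∫ t in (0:ℝ)..l, 1 / (1 - t ^ 2)) = (1/2) * Real.log ((1 + l) / (1 - l)) := by
  have huIcc : Set.uIcc (0:ℝ) l = Set.Icc 0 l := Set.uIcc_of_le hl0.le
  have hmem : ∀ x ∈ Set.uIcc (0:ℝ) l, -1 < x ∧ x < 1 := by
    intro x hx
    rw [huIcc] at hx
    exact ⟨by linarith [hx.1], lt_of_le_of_lt hx.2 hl1⟩
  have hne : ∀ x ∈ Set.uIcc (0:ℝ) l, (1:ℝ) - x^2 ≠ 0 := by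
    intro x hx
    obtain ⟨h1, h2⟩ := hmem x hx
    nlinarith
  have hl2 : (1:ℝ) - l^2 ≠ 0 := by nlinarith
  have h1l : (1:ℝ) + l ≠ 0 := by linarith
  have h1l' : (1:ℝ) - l ≠ 0 := by linarith
  constructor
  · have hint : IntervalIntegrable (fun t : ℝ => t ^ (2*j) / (1 - t^2) ^ (j+1))
        MeasureTheory.volume 0 l := by
      apply ContinuousOn.intervalIntegrable
      exact ContinuousOn.div (by fun_prop) (by fun_prop)
        (fun x hx => pow_ne_zero _ (hne x hx))
    have hftc := intervalIntegral.integral_eq_sub_of_hasDerivAt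
      (f := fun y : ℝ =>
        (-1:ℝ)^j * (poch (1/2) j / (2 * (Nat.factorial j:ℝ))) *
          (Real.log (1+y) - Real.log (1-y))
        + ∑ n ∈ range j, dd j n * (y^(2*(j-n)-1) / (1-y^2)^(j-n)))
      (fun x hx => hasDerivG j hj x (hmem x hx).1 (hmem x hx).2) hint
    rw [hftc]
    beta_reduce
    have hG0 : ((-1:ℝ)^j * (poch (1/2) j / (2 * (Nat.factorial j:ℝ))) *
          (Real.log (1+(0:ℝ)) - Real.log (1-(0:ℝ)))
        + ∑ n ∈ range j, dd j n * ((0:ℝ)^(2*(j-n)-1) / (1-(0:ℝ)^2)^(j-n))) = 0 := by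
      have hs : ∑ n ∈ range j, dd j n * ((0:ℝ)^(2*(j-n)-1) / (1-(0:ℝ)^2)^(j-n)) = 0 := by
        apply Finset.sum_eq_zero
        intro n hn
        have h : 2*(j-n)-1 ≠ 0 := by have := Finset.mem_range.mp hn; omega
        simp [zero_pow h]
      rw [hs]
      simp
    rw [hG0, sub_zero]
    congr 1
    · rw [Real.log_div h1l h1l']
    · rw [Finset.mul_sum]
      refine Finset.sum_congr rfl fun n hn => ?_
      obtain ⟨k, hk⟩ : ∃ k, j - n = k+1 :=
        ⟨j - n - 1, by have := Finset.mem_range.mp hn; omega⟩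
      rw [hk, dd, show 2*(k+1)-1 = 2*k+1 from by omega]
      have hjne : (j:ℝ) ≠ 0 := Nat.cast_ne_zero.mpr (by omega)
      have hq : poch (1 - (j:ℝ)) n ≠ 0 :=
        poch_one_sub_ne_zero j n hj (by have := Finset.mem_range.mp hn; omega)
      rw [div_pow]
      field_simp
      ring
  · have hint : IntervalIntegrable (fun t : ℝ => 1 / (1 - t^2))
        MeasureTheory.volume 0 l := by
      apply ContinuousOn.intervalIntegrable
      exact ContinuousOn.div (by fun_prop) (by fun_prop) (fun x hx => hne x hx)
    have hderiv : ∀ x ∈ Set.uIcc (0:ℝ) l,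
        HasDerivAt (fun y : ℝ => (1/2) * (Real.log (1+y) - Real.log (1-y)))
          (1/(1-x^2)) x := by
      intro x hx
      have h := (hasDeriv_log_part x (hmem x hx).1 (hmem x hx).2).const_mul (1/2 : ℝ)
      refine h.congr_deriv (Eq.symm ?_)
      ring
    have hftc := intervalIntegral.integral_eq_sub_of_hasDerivAt hderiv hint
    rw [hftc]
    rw [Real.log_div h1l h1l']
    norm_num
end

section
/- For every real a > 0 and every λ with 0 < λ < 1, one has ∫₀^λ t^{2a}/(1−t²)^{a+1} dt ≤ λ^{2a+1}/(2a·(1−λ²)^a). -/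
open Real

theorem stmt1 (a : ℝ) (ha : 0 < a) (l : ℝ) (hl0 : 0 < l) (hl1 : l < 1) :
    (∫ t in (0:ℝ)..l, t ^ (2 * a) / (1 - t ^ 2) ^ (a + 1)) ≤
      l ^ (2 * a + 1) / (2 * a * (1 - l ^ 2) ^ a) := by
  have h2a : (0:ℝ) < 2 * a := by linarith
  set F : ℝ → ℝ := fun t => t ^ (2*a+1) * (1 - t^2) ^ (-a) / (2*a) with hF
  set G : ℝ → ℝ := fun t => ((2*a+1) * t ^ (2*a) * (1 - t^2) ^ (-a)
      + t ^ (2*a+1) * ((-(2*t)) * (-a) * (1 - t^2) ^ (-a-1))) / (2*a) with hG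
  have hv : ∀ t ∈ Set.Icc (0:ℝ) l, (0:ℝ) < 1 - t^2 := by
    intro t ht
    have h1 : t ≤ l := ht.2
    have h0 : 0 ≤ t := ht.1
    nlinarith
  have hderiv : ∀ t ∈ Set.Icc (0:ℝ) l, HasDerivAt F (G t) t := by
    intro t ht
    have hvt := hv t ht
    have h1 : HasDerivAt (fun t : ℝ => t ^ (2*a+1)) ((2*a+1) * t ^ (2*a+1-1)) t :=
      Real.hasDerivAt_rpow_const (Or.inr (by linarith))
    have h2 : HasDerivAt (fun t : ℝ => (1 - t^2 : ℝ)) (-(2*t)) t := by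
      simpa using ((hasDerivAt_id t).pow 2).const_sub 1
    have h3 := h2.rpow_const (p := -a) (Or.inl hvt.ne')
    have he : 2*a+1-1 = 2*a := by ring
    have := (h1.mul h3).div_const (2*a)
    rw [he] at this
    exact this
  -- continuity helpers
  have hcont_pow : ContinuousOn (fun t : ℝ => t ^ (2*a)) (Set.Icc 0 l) :=
    continuousOn_id.rpow_const (fun t _ => Or.inr h2a.le)
  have hcont_pow1 : ContinuousOn (fun t : ℝ => t ^ (2*a+1)) (Set.Icc 0 l) :=
    continuousOn_id.rpow_const (fun t _ => Or.inr (by linarith))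
  have hcont_base : ContinuousOn (fun t : ℝ => (1 - t^2 : ℝ)) (Set.Icc 0 l) :=
    (continuous_const.sub (continuous_pow 2)).continuousOn
  have hcont_vpow : ∀ p : ℝ, ContinuousOn (fun t : ℝ => (1 - t^2 : ℝ) ^ p) (Set.Icc 0 l) :=
    fun p => hcont_base.rpow_const (fun t ht => Or.inl (hv t ht).ne')
  have hint1 : IntervalIntegrable (fun t : ℝ => t ^ (2*a) / (1 - t^2) ^ (a+1))
      MeasureTheory.volume 0 l := by
    apply ContinuousOn.intervalIntegrable
    rw [Set.uIcc_of_le hl0.le]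
    exact hcont_pow.div (hcont_vpow (a+1))
      (fun t ht => (Real.rpow_pos_of_pos (hv t ht) (a+1)).ne')
  have hint2 : IntervalIntegrable G MeasureTheory.volume 0 l := by
    apply ContinuousOn.intervalIntegrable
    rw [Set.uIcc_of_le hl0.le]
    apply ContinuousOn.div_const
    exact (((continuousOn_const.mul hcont_pow).mul (hcont_vpow (-a))).add
      (hcont_pow1.mul ((((continuous_const.mul continuous_id).neg).continuousOn.mul
        continuousOn_const).mul (hcont_vpow (-a-1)))))
  have hle : ∀ t ∈ Set.Icc (0:ℝ) l, t ^ (2*a) / (1 - t^2) ^ (a+1) ≤ G t := by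
    intro t ht
    have hvt := hv t ht
    rcases eq_or_lt_of_le ht.1 with h0 | h0
    · simp [hG, ← h0, Real.zero_rpow h2a.ne', Real.zero_rpow (by linarith : 2*a+1 ≠ 0)]
    · have hu : 0 ≤ t ^ (2*a) := Real.rpow_nonneg ht.1 _
      have hw : 0 < (1 - t^2) ^ (a+1) := Real.rpow_pos_of_pos hvt (a+1)
      have ht1 : t^2 < 1 := by nlinarith [ht.2]
      have e1 : t ^ (2*a+1) = t ^ (2*a) * t := Real.rpow_add_one h0.ne' _
      have e2 : (1 - t^2) ^ (-a) = (1 - t^2) ^ (-a-1) * (1 - t^2) := by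
        rw [← Real.rpow_add_one hvt.ne' (-a-1)]; ring_nf
      have e3 : (1 - t^2) ^ (-a-1) = ((1 - t^2) ^ (a+1))⁻¹ := by
        rw [← Real.rpow_neg hvt.le]; ring_nf
      simp only [hG]
      rw [e1, e2, e3]
      rw [div_le_div_iff₀ hw h2a]
      have hwne : ((1 - t^2) ^ (a+1)) ≠ 0 := hw.ne'
      field_simp
      nlinarith [mul_nonneg hu hvt.le]
  have hFTC : (∫ t in (0:ℝ)..l, G t) = F l - F 0 :=
    intervalIntegral.integral_eq_sub_of_hasDerivAt
      (by intro t ht; exact hderiv t (by rwa [Set.uIcc_of_le hl0.le] at ht)) hint2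
  have hmono := intervalIntegral.integral_mono_on hl0.le hint1 hint2 hle
  have hF0 : F 0 = 0 := by
    simp [hF, Real.zero_rpow (by linarith : 2*a+1 ≠ 0)]
  have hFl : F l = l ^ (2 * a + 1) / (2 * a * (1 - l ^ 2) ^ a) := by
    have hpos : (0:ℝ) < 1 - l^2 := by nlinarith
    simp only [hF]
    rw [Real.rpow_neg hpos.le]
    field_simp
  calc (∫ t in (0:ℝ)..l, t ^ (2 * a) / (1 - t ^ 2) ^ (a + 1))
      ≤ ∫ t in (0:ℝ)..l, G t := hmono
    _ = F l - F 0 := hFTC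
    _ = l ^ (2 * a + 1) / (2 * a * (1 - l ^ 2) ^ a) := by rw [hF0, hFl]; ring
end

section
/- For every nonnegative integer n and every real x, Σ_{m=0}^n ((−n)_m (1/2)_m / ((1)_m m!)) x^m = (1/π) ∫₀^π (1 − x·sin²(φ/2))^n dφ. -/
open Real Finset intervalIntegral

lemma poch_one_eq (m : ℕ) : poch 1 m = (Nat.factorial m : ℝ) := by
  unfold poch
  rw [← Finset.prod_range_add_one_eq_factorial m]
  push_cast
  exact Finset.prod_congr rfl (fun i _ => by ring)

lemma poch_half_div (m : ℕ) :
    poch (1/2) m / (Nat.factorial m : ℝ) = ∏ i ∈ range m, (2*(i:ℝ)+1)/(2*i+2) := by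
  rw [← poch_one_eq]
  unfold poch
  rw [← Finset.prod_div_distrib]
  refine Finset.prod_congr rfl (fun i _ => ?_)
  have h1 : (1:ℝ) + i ≠ 0 := by positivity
  have h2 : (2:ℝ)*i + 2 ≠ 0 := by positivity
  field_simp
  ring

lemma poch_neg (n m : ℕ) (h : m ≤ n) :
    poch (-(n:ℝ)) m = (-1)^m * (n.descFactorial m : ℝ) := by
  induction m with
  | zero => simp [poch]
  | succ k ih =>
    have hk : k ≤ n := Nat.le_of_succ_le h
    have hk' : k < n := Nat.lt_of_succ_le h
    unfold poch at *
    rw [Finset.prod_range_succ, ih hk, Nat.descFactorial_succ]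
    have : ((n - k : ℕ) : ℝ) = (n : ℝ) - k := by
      have := Nat.cast_sub hk (R := ℝ); linarith
    push_cast [Nat.cast_sub hk]
    ring

lemma sin_pow_even_halfpi (m : ℕ) :
    ∫ x in (0:ℝ)..(π/2), sin x ^ (2*m) = (π/2) * ∏ i ∈ range m, (2*(i:ℝ)+1)/(2*i+2) := by
  induction' m with k ih; · simp
  rw [prod_range_succ_comm, mul_left_comm, ← ih, Nat.mul_succ, integral_sin_pow]
  norm_cast
  simp [-Nat.cast_add]

lemma sin_half_pow_even (m : ℕ) :
    ∫ phi in (0:ℝ)..π, sin (phi/2) ^ (2*m)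
      = π * ∏ i ∈ range m, (2*(i:ℝ)+1)/(2*i+2) := by
  have h := intervalIntegral.integral_comp_div (a := (0:ℝ)) (b := π)
    (f := fun u => sin u ^ (2*m)) (c := 2) two_ne_zero
  simp only [zero_div] at h
  rw [h, sin_pow_even_halfpi, smul_eq_mul]
  ring

theorem stmt3 (n : ℕ) (x : ℝ) :
    ∑ m ∈ Finset.range (n + 1),
        poch (-(n : ℝ)) m * poch (1/2) m / (poch 1 m * (Nat.factorial m : ℝ)) * x ^ m
      = (1 / π) * ∫ phi in (0:ℝ)..π, (1 - x * Real.sin (phi / 2) ^ 2) ^ n := by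
  have hb : ∀ phi : ℝ, (1 - x * Real.sin (phi/2) ^ 2) ^ n
      = ∑ m ∈ range (n+1), (n.choose m : ℝ) * (-x)^m * sin (phi/2) ^ (2*m) := by
    intro phi
    rw [sub_eq_add_neg, add_comm, add_pow]
    refine Finset.sum_congr rfl (fun m _ => ?_)
    rw [pow_mul]
    ring
  have hint : ∀ m ∈ range (n+1), IntervalIntegrable
      (fun phi : ℝ => (n.choose m : ℝ) * (-x)^m * sin (phi/2) ^ (2*m))
      MeasureTheory.volume 0 π := by
    intro m _
    exact (Continuous.intervalIntegrable (by fun_prop) 0 π)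
  rw [show (∫ phi in (0:ℝ)..π, (1 - x * Real.sin (phi / 2) ^ 2) ^ n)
      = ∫ phi in (0:ℝ)..π, ∑ m ∈ range (n+1),
          (n.choose m : ℝ) * (-x)^m * sin (phi/2) ^ (2*m) from
    intervalIntegral.integral_congr (fun phi _ => hb phi)]
  rw [intervalIntegral.integral_finset_sum hint]
  rw [Finset.mul_sum]
  refine Finset.sum_congr rfl (fun m hm => ?_)
  have hmn : m ≤ n := Nat.lt_succ_iff.mp (Finset.mem_range.mp hm)
  rw [intervalIntegral.integral_const_mul, sin_half_pow_even]
  rw [poch_one_eq, poch_neg n m hmn, Nat.descFactorial_eq_factorial_mul_choose]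
  have hP := poch_half_div m
  have hm0 : (Nat.factorial m : ℝ) ≠ 0 := Nat.cast_ne_zero.2 m.factorial_ne_zero
  have hpi : (π : ℝ) ≠ 0 := Real.pi_ne_zero
  have : poch (1/2) m = (Nat.factorial m : ℝ) * ∏ i ∈ range m, (2*(i:ℝ)+1)/(2*i+2) := by
    rw [← hP]; field_simp
  rw [this]
  push_cast
  field_simp
  ring
end

section
/- For every real x with 0 < x < 1, the series s₁(x) = Σ_{j=2}^∞ ((1/2)_j·(1/2−j))/((1−j)·j·j!) · (−x)^j converges and s₁(x) = (x/2 − 1)·ln((1+√(1+x))/2) − (1/2)·√(1+x) + 1/2 + x/2. -/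
open Real Finset

namespace Stmt14Aux


noncomputable def gam (n : ℕ) : ℝ := (n.centralBinom : ℝ) / 4 ^ n

lemma gam_pos (n : ℕ) : 0 < gam n :=
  div_pos (by exact_mod_cast n.centralBinom_pos) (by positivity)

lemma gam_zero : gam 0 = 1 := by simp [gam, Nat.centralBinom]

lemma gam_one : gam 1 = 1 / 2 := by
  simp [gam, Nat.centralBinom]
  norm_num

lemma gam_two : gam 2 = 3 / 8 := by
  simp [gam, Nat.centralBinom]
  rw [show (2*2 : ℕ).choose 2 = 6 from rfl]
  norm_num

lemma gam_rec (n : ℕ) : 2 * ((n : ℝ) + 1) * gam (n + 1) = (2 * n + 1) * gam n := by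
  have h := Nat.succ_mul_centralBinom_succ n
  have h' : ((n : ℝ) + 1) * (Nat.centralBinom (n + 1) : ℝ)
      = 2 * (2 * n + 1) * (n.centralBinom : ℝ) := by exact_mod_cast h
  have h4 : (4 : ℝ) ^ (n + 1) = 4 * 4 ^ n := by ring
  rw [gam, gam, h4]
  linear_combination h' / (2 * 4 ^ n)

lemma gam_le_one (n : ℕ) : gam n ≤ 1 := by
  induction n with
  | zero => simp [gam_zero]
  | succ n ih =>
    have hrec := gam_rec n
    have hpos : (0 : ℝ) < 2 * ((n : ℝ) + 1) := by positivity
    have : gam (n + 1) = (2 * n + 1) * gam n / (2 * ((n : ℝ) + 1)) := by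
      field_simp
      linarith [hrec]
    rw [this]
    rw [div_le_one hpos]
    nlinarith [gam_pos n]



lemma summable_aux {r : ℝ} (hr0 : 0 < r) (hr1 : r < 1) :
    Summable fun n : ℕ => (n : ℝ) * r ^ (n - 1) := by
  have h := summable_pow_mul_geometric_of_norm_lt_one (R := ℝ) 1
    (r := r) (by rwa [Real.norm_eq_abs, abs_of_pos hr0])
  refine (h.mul_left r⁻¹).congr fun n => ?_
  cases n with
  | zero => simp
  | succ m =>
    have : r ^ (m + 1) = r * r ^ m := by ring
    simp only [pow_one, this, Nat.add_sub_cancel]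
    field_simp

lemma summable_series {c : ℕ → ℝ} {C : ℝ} (hc : ∀ n, |c n| ≤ C) {t : ℝ} (ht : |t| < 1) :
    Summable fun n => c n * t ^ n := by
  refine Summable.of_norm_bounded (g := fun n => C * |t| ^ n)
    ((summable_geometric_of_lt_one (abs_nonneg t) ht).mul_left C) fun n => ?_
  rw [norm_mul, norm_pow, Real.norm_eq_abs, Real.norm_eq_abs]
  exact mul_le_mul_of_nonneg_right (hc n) (pow_nonneg (abs_nonneg t) n)

lemma summable_series' {c : ℕ → ℝ} {C : ℝ} (hc : ∀ n, |c n| ≤ C) {t : ℝ} (ht : |t| < 1) :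
    Summable fun n => c n * ((n : ℝ) * t ^ (n - 1)) := by
  have hC0 : 0 ≤ C := le_trans (abs_nonneg _) (hc 0)
  set r := (1 + |t|) / 2 with hrdef
  have hr0 : 0 < r := by positivity
  have hr1 : r < 1 := by rw [hrdef]; linarith
  have htr : |t| < r := by rw [hrdef]; linarith
  refine Summable.of_norm_bounded (g := fun n => C * ((n : ℝ) * r ^ (n - 1)))
    ((summable_aux hr0 hr1).mul_left C) fun n => ?_
  rw [norm_mul, norm_mul, norm_pow, Real.norm_eq_abs, Real.norm_eq_abs, Real.norm_eq_abs,
    Nat.abs_cast]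
  have h1 : |t| ^ (n - 1) ≤ r ^ (n - 1) := pow_le_pow_left₀ (abs_nonneg t) htr.le _
  have := mul_le_mul_of_nonneg_left h1 (Nat.cast_nonneg (α := ℝ) n)
  calc |c n| * ((n : ℝ) * |t| ^ (n - 1)) ≤ C * ((n : ℝ) * |t| ^ (n - 1)) := by
        exact mul_le_mul_of_nonneg_right (hc n) (by positivity)
    _ ≤ C * ((n : ℝ) * r ^ (n - 1)) := by
        exact mul_le_mul_of_nonneg_left this hC0

lemma hasDerivAt_series {c : ℕ → ℝ} {C : ℝ} (hc : ∀ n, |c n| ≤ C) {t : ℝ} (ht : |t| < 1) :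
    HasDerivAt (fun y => ∑' n, c n * y ^ n) (∑' n, c n * ((n : ℝ) * t ^ (n - 1))) t := by
  have hC0 : 0 ≤ C := le_trans (abs_nonneg _) (hc 0)
  set r := (1 + |t|) / 2 with hrdef
  have hr0 : 0 < r := by positivity
  have hr1 : r < 1 := by rw [hrdef]; linarith
  have htr : |t| < r := by rw [hrdef]; linarith
  have hmem : t ∈ Set.Ioo (-r) r := by
    rcases abs_lt.mp htr with ⟨h1, h2⟩; exact ⟨h1, h2⟩
  have hmem0 : (0 : ℝ) ∈ Set.Ioo (-r) r := ⟨by linarith, hr0⟩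
  refine hasDerivAt_tsum_of_isPreconnected
    (u := fun n : ℕ => C * ((n : ℝ) * r ^ (n - 1)))
    (g := fun (n : ℕ) (y : ℝ) => c n * y ^ n)
    (g' := fun (n : ℕ) (y : ℝ) => c n * ((n : ℝ) * y ^ (n - 1)))
    ((summable_aux hr0 hr1).mul_left C) isOpen_Ioo (convex_Ioo (-r) r).isPreconnected
    (fun n y _ => (hasDerivAt_pow n y).const_mul (c n)) (fun n y hy => ?_) hmem0
    (summable_series hc (by simp : |(0:ℝ)| < 1)) hmem
  have hyr : |y| ≤ r := by
    rcases hy with ⟨h1, h2⟩; rw [abs_le]; exact ⟨h1.le, h2.le⟩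
  rw [Real.norm_eq_abs, abs_mul, abs_mul, abs_pow, Nat.abs_cast]
  calc |c n| * ((n : ℝ) * |y| ^ (n - 1)) ≤ C * ((n : ℝ) * |y| ^ (n - 1)) := by
        exact mul_le_mul_of_nonneg_right (hc n) (by positivity)
    _ ≤ C * ((n : ℝ) * r ^ (n - 1)) := by
        refine mul_le_mul_of_nonneg_left (mul_le_mul_of_nonneg_left
          (pow_le_pow_left₀ (abs_nonneg y) hyr _) (Nat.cast_nonneg n)) hC0

lemma const_on {F : ℝ → ℝ} (hF : ∀ y ∈ Set.Ioo (-1 : ℝ) 1, HasDerivAt F 0 y)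
    {t : ℝ} (ht : t ∈ Set.Ioo (-1 : ℝ) 1) : F t = F 0 := by
  obtain ⟨ht1, ht2⟩ := ht
  rcases le_total t 0 with h | h
  · have key := constant_of_has_deriv_right_zero (f := F) (a := t) (b := 0)
      (fun y hy => (hF y ⟨lt_of_lt_of_le ht1 hy.1, lt_of_le_of_lt hy.2 one_pos⟩).continuousAt.continuousWithinAt)
      (fun y hy => ((hF y ⟨lt_of_lt_of_le ht1 hy.1, lt_of_le_of_lt hy.2.le one_pos⟩)).hasDerivWithinAt)
    have := key 0 ⟨h, le_refl 0⟩
    linarith [this]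
  · have key := constant_of_has_deriv_right_zero (f := F) (a := 0) (b := t)
      (fun y hy => (hF y ⟨lt_of_lt_of_le (by linarith) hy.1, lt_of_le_of_lt hy.2 ht2⟩).continuousAt.continuousWithinAt)
      (fun y hy => ((hF y ⟨lt_of_lt_of_le (by linarith) hy.1, lt_of_le_of_lt hy.2.le ht2⟩)).hasDerivWithinAt)
    exact key t ⟨h, le_refl t⟩



lemma gam_abs (n : ℕ) : |gam n| ≤ 1 := by
  rw [abs_of_pos (gam_pos n)]; exact gam_le_one n

noncomputable def gS (t : ℝ) : ℝ := ∑' n, gam n * t ^ n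
noncomputable def gD (t : ℝ) : ℝ := ∑' n, gam n * ((n : ℝ) * t ^ (n - 1))

lemma hasSum_gS {t : ℝ} (ht : |t| < 1) : HasSum (fun n => gam n * t ^ n) (gS t) :=
  (summable_series gam_abs ht).hasSum

lemma hasSum_gD {t : ℝ} (ht : |t| < 1) :
    HasSum (fun n => gam n * ((n : ℝ) * t ^ (n - 1))) (gD t) :=
  (summable_series' gam_abs ht).hasSum

lemma hasDerivAt_gS {t : ℝ} (ht : |t| < 1) : HasDerivAt gS (gD t) t :=
  hasDerivAt_series gam_abs ht

lemma hasSum_t_gD {t : ℝ} (ht : |t| < 1) :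
    HasSum (fun n : ℕ => gam n * ((n : ℝ) * t ^ n)) (t * gD t) := by
  have h := (hasSum_gD ht).mul_left t
  have hfun : (fun n : ℕ => t * (gam n * ((n : ℝ) * t ^ (n - 1))))
      = fun n : ℕ => gam n * ((n : ℝ) * t ^ n) := by
    funext n
    cases n with
    | zero => simp
    | succ m => rw [Nat.add_sub_cancel, pow_succ]; push_cast; ring
  rwa [hfun] at h

lemma ode {t : ℝ} (ht : |t| < 1) : 2 * (1 - t) * gD t = gS t := by
  have hD := hasSum_gD ht
  have hg := hasSum_gS ht
  have hE : HasSum (fun n : ℕ => gam (n + 1) * (((n : ℝ) + 1) * t ^ n)) (gD t) := by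
    have h := (hasSum_nat_add_iff' (f := fun n => gam n * ((n : ℝ) * t ^ (n - 1))) 1).mpr hD
    simp only [range_one, sum_singleton, Nat.cast_zero, Nat.cast_add, Nat.cast_one,
      Nat.add_sub_cancel, pow_zero, zero_mul, mul_zero, sub_zero] at h
    exact h
  have hsub := (hE.mul_left 2).sub hg
  have hfun : (fun n : ℕ => 2 * (gam (n + 1) * (((n : ℝ) + 1) * t ^ n)) - gam n * t ^ n)
      = fun n : ℕ => 2 * (gam n * ((n : ℝ) * t ^ n)) := by
    funext n
    linear_combination t ^ n * gam_rec n
  rw [hfun] at hsub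
  have huniq := hsub.unique ((hasSum_t_gD ht).mul_left 2)
  linarith

lemma gS_zero : gS 0 = 1 := by
  rw [gS, tsum_eq_single 0 (fun n hn => by simp [zero_pow hn])]
  simp [gam_zero]

lemma gS_sq {t : ℝ} (ht : |t| < 1) : gS t ^ 2 * (1 - t) = 1 := by
  have key : ∀ y ∈ Set.Ioo (-1 : ℝ) 1, HasDerivAt (fun y => gS y ^ 2 * (1 - y)) 0 y := by
    intro y hy
    have hy' : |y| < 1 := abs_lt.mpr ⟨hy.1, hy.2⟩
    have h1 := hasDerivAt_gS hy'
    have h2 : HasDerivAt (fun y : ℝ => 1 - y) (-1) y := (hasDerivAt_id y).const_sub 1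
    have h3 := (h1.pow 2).mul h2
    refine h3.congr_deriv ?_
    have hode := ode hy'
    simp only [Pi.pow_apply]
    push_cast
    linear_combination (gS y) * hode
  have ht' : t ∈ Set.Ioo (-1 : ℝ) 1 := ⟨(abs_lt.mp ht).1, (abs_lt.mp ht).2⟩
  have := const_on key ht'
  simpa [gS_zero] using this

lemma abs_le_of_mem_uIcc {t y : ℝ} (hy : y ∈ Set.uIcc t 0) : |y| ≤ |t| := by
  rcases Set.mem_uIcc.mp hy with ⟨h1, h2⟩ | ⟨h1, h2⟩ <;>
    (rw [abs_le]; constructor <;> linarith [neg_abs_le t, le_abs_self t, abs_nonneg t])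

lemma gS_pos {t : ℝ} (ht : |t| < 1) : 0 < gS t := by
  by_contra h
  push_neg at h
  have h1t : (0 : ℝ) < 1 - t := by
    have := (abs_lt.mp ht).2; linarith
  have hne : gS t ≠ 0 := by
    intro h0
    have := gS_sq ht
    rw [h0] at this; norm_num at this
  have hlt : gS t < 0 := lt_of_le_of_ne h hne
  have hcont : ContinuousOn gS (Set.uIcc t 0) := fun y hy =>
    (hasDerivAt_gS (lt_of_le_of_lt (abs_le_of_mem_uIcc hy) ht)).continuousAt.continuousWithinAt
  have hsub := intermediate_value_uIcc hcont
  have h0mem : (0 : ℝ) ∈ Set.uIcc (gS t) (gS 0) := by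
    rw [gS_zero, Set.mem_uIcc]
    left; exact ⟨hlt.le, zero_le_one⟩
  obtain ⟨c, hc, hc0⟩ := hsub h0mem
  have hc' : |c| < 1 := lt_of_le_of_lt (abs_le_of_mem_uIcc hc) ht
  have := gS_sq hc'
  rw [hc0] at this; norm_num at this

lemma gS_eq {t : ℝ} (ht : |t| < 1) : gS t = (Real.sqrt (1 - t))⁻¹ := by
  have h1t : (0 : ℝ) < 1 - t := by
    have := (abs_lt.mp ht).2; linarith
  have hsq : gS t ^ 2 = (1 - t)⁻¹ := by
    have := gS_sq ht
    field_simp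
    linarith [this]
  have := Real.sqrt_sq (gS_pos ht).le
  rw [← this, hsq, ← Real.sqrt_inv]

lemma gD_eq {t : ℝ} (ht : |t| < 1) : gD t = gS t / (2 * (1 - t)) := by
  have h1t : (0 : ℝ) < 1 - t := by
    have := (abs_lt.mp ht).2; linarith
  have := ode ht
  field_simp
  linarith



noncomputable def c1 (n : ℕ) : ℝ :=
  if n < 2 then 0 else gam n * ((n : ℝ) - 1/2) / (((n : ℝ) - 1) * n)

noncomputable def d1 (n : ℕ) : ℝ := c1 (n + 1) * ((n : ℝ) + 1)

lemma c1_add2 (n : ℕ) :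
    c1 (n + 2) = gam (n + 2) * ((n : ℝ) + 3/2) / (((n : ℝ) + 1) * ((n : ℝ) + 2)) := by
  rw [c1, if_neg (by omega)]
  push_cast
  ring_nf

lemma c1_abs (n : ℕ) : |c1 n| ≤ 1 := by
  match n with
  | 0 => simp [c1]
  | 1 => simp [c1]
  | (m + 2) =>
    rw [c1_add2]
    have h1 : (0 : ℝ) < (m : ℝ) + 1 := by positivity
    have h2 : (0 : ℝ) < (m : ℝ) + 2 := by positivity
    have h3 : (0 : ℝ) < (m : ℝ) + 3/2 := by positivity
    have hpos : 0 < gam (m + 2) * ((m : ℝ) + 3/2) / (((m : ℝ) + 1) * ((m : ℝ) + 2)) := by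
      apply div_pos (mul_pos (gam_pos _) h3) (mul_pos h1 h2)
    rw [abs_of_pos hpos, div_le_one (mul_pos h1 h2)]
    nlinarith [gam_le_one (m + 2), gam_pos (m + 2)]

lemma d1_abs (n : ℕ) : |d1 n| ≤ 2 := by
  match n with
  | 0 => simp [d1, c1]
  | (m + 1) =>
    rw [d1, c1_add2]
    have h1 : (0 : ℝ) < (m : ℝ) + 1 := by positivity
    have h2 : (0 : ℝ) < (m : ℝ) + 2 := by positivity
    have h3 : (0 : ℝ) < (m : ℝ) + 3/2 := by positivity
    have hpos : 0 < gam (m + 2) * ((m : ℝ) + 3/2) / (((m : ℝ) + 1) * ((m : ℝ) + 2))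
        * ((m : ℝ) + 1 + 1) := by
      apply mul_pos (div_pos (mul_pos (gam_pos _) h3) (mul_pos h1 h2)); positivity
    have hcast : ((m : ℝ) + 1 + 1) = (m : ℝ) + 2 := by ring
    rw [show ((m + 1 : ℕ) : ℝ) = (m : ℝ) + 1 by push_cast; ring]
    rw [abs_of_pos hpos, hcast]
    rw [div_mul_eq_mul_div, div_le_iff₀ (mul_pos h1 h2)]
    have hb : gam (m + 2) * ((m : ℝ) + 3/2) ≤ (m : ℝ) + 3/2 :=
      mul_le_of_le_one_left h3.le (gam_le_one _)
    nlinarith [mul_le_mul_of_nonneg_right hb h2.le]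

noncomputable def Fs (u : ℝ) : ℝ := ∑' n, c1 n * u ^ n
noncomputable def F1 (u : ℝ) : ℝ := ∑' n, d1 n * u ^ n
noncomputable def F2v (u : ℝ) : ℝ := ∑' n, d1 n * ((n : ℝ) * u ^ (n - 1))

lemma F1_hasSum {u : ℝ} (hu : |u| < 1) :
    HasSum (fun n => d1 n * u ^ n) (∑' n, c1 n * ((n : ℝ) * u ^ (n - 1))) := by
  have hD := (summable_series' c1_abs hu).hasSum
  have h := (hasSum_nat_add_iff' (f := fun n => c1 n * ((n : ℝ) * u ^ (n - 1))) 1).mpr hD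
  simp only [range_one, sum_singleton, Nat.cast_zero, zero_mul, mul_zero, sub_zero] at h
  have hfun : (fun n : ℕ => c1 (n + 1) * (((n + 1 : ℕ) : ℝ) * u ^ (n + 1 - 1)))
      = fun n => d1 n * u ^ n := by
    funext n; rw [Nat.add_sub_cancel, d1]; push_cast; ring
  rwa [hfun] at h

lemma F1_eq {u : ℝ} (hu : |u| < 1) : F1 u = ∑' n, c1 n * ((n : ℝ) * u ^ (n - 1)) :=
  (F1_hasSum hu).tsum_eq

lemma hasDerivAt_Fs {u : ℝ} (hu : |u| < 1) : HasDerivAt Fs (F1 u) u := by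
  rw [F1_eq hu]; exact hasDerivAt_series c1_abs hu

lemma hasDerivAt_F1 {u : ℝ} (hu : |u| < 1) : HasDerivAt F1 (F2v u) u :=
  hasDerivAt_series d1_abs hu

lemma key_coeff (n : ℕ) : d1 (n + 1) * ((n : ℝ) + 1) = gam (n + 2) * ((n : ℝ) + 3/2) := by
  rw [d1, c1_add2]
  have h1 : ((n : ℝ) + 1) ≠ 0 := by positivity
  have h2 : ((n : ℝ) + 2) ≠ 0 := by positivity
  push_cast
  field_simp
  ring

lemma hasSum_E {u : ℝ} (hu : |u| < 1) :
    HasSum (fun n => gam (n + 2) * ((n : ℝ) + 3/2) * u ^ n) (F2v u) := by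
  have hD := (summable_series' d1_abs hu).hasSum
  have h := (hasSum_nat_add_iff' (f := fun n => d1 n * ((n : ℝ) * u ^ (n - 1))) 1).mpr hD
  simp only [range_one, sum_singleton, Nat.cast_zero, zero_mul, mul_zero, sub_zero] at h
  have hfun : (fun n : ℕ => d1 (n + 1) * (((n + 1 : ℕ) : ℝ) * u ^ (n + 1 - 1)))
      = fun n => gam (n + 2) * ((n : ℝ) + 3/2) * u ^ n := by
    funext n
    rw [Nat.add_sub_cancel]
    push_cast
    rw [show d1 (n + 1) * (((n : ℝ) + 1) * u ^ n) = (d1 (n + 1) * ((n : ℝ) + 1)) * u ^ n by ring,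
      key_coeff]
  rwa [hfun] at h

lemma F2v_closed {u : ℝ} (hu : |u| < 1) :
    u ^ 2 * F2v u = u * gD u - gS u / 2 + 1/2 - u / 4 := by
  have hW : HasSum (fun n : ℕ => ((n : ℝ) - 1/2) * gam n * u ^ n)
      (u * gD u - gS u / 2) := by
    have h1 := hasSum_t_gD hu
    have h2 := (hasSum_gS hu).div_const 2
    have h := h1.sub h2
    have hfun : (fun n : ℕ => gam n * ((n : ℝ) * u ^ n) - gam n * u ^ n / 2)
        = fun n : ℕ => ((n : ℝ) - 1/2) * gam n * u ^ n := by
      funext n; ring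
    rwa [hfun] at h
  have h := (hasSum_nat_add_iff' (f := fun n : ℕ => ((n : ℝ) - 1/2) * gam n * u ^ n) 2).mpr hW
  simp only [Finset.sum_range_succ, Finset.sum_range_zero, Nat.cast_zero, Nat.cast_one,
    pow_zero, pow_one, zero_add] at h
  rw [gam_zero, gam_one] at h
  have h2 := (hasSum_E hu).mul_left (u ^ 2)
  have hfun : (fun n : ℕ => u ^ 2 * (gam (n + 2) * ((n : ℝ) + 3/2) * u ^ n))
      = fun n : ℕ => (((n + 2 : ℕ) : ℝ) - 1/2) * gam (n + 2) * u ^ (n + 2) := by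
    funext n; push_cast; ring
  rw [hfun] at h2
  have := h2.unique h
  rw [this]; ring

lemma F2v_zero : F2v 0 = 9/16 := by
  rw [F2v, tsum_eq_single 1 ?_]
  · rw [show d1 1 = c1 2 * 2 by rw [d1]; norm_num]
    rw [show c1 2 = gam 2 * (3/2) / (1 * 2) by
      have := c1_add2 0; simpa using this]
    rw [gam_two]; norm_num
  · intro n hn
    match n, hn with
    | 0, _ => simp
    | (m + 2), _ => simp [zero_pow]

lemma Fs_zero : Fs 0 = 0 := by
  rw [Fs, tsum_eq_single 0 (fun n hn => by simp [zero_pow hn])]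
  simp [c1]

lemma F1_zero : F1 0 = 0 := by
  rw [F1, tsum_eq_single 0 (fun n hn => by simp [zero_pow hn])]
  simp [d1, c1]

lemma hasSum_Fs_shift {u : ℝ} (hu : |u| < 1) :
    HasSum (fun j : ℕ => c1 (j + 2) * u ^ (j + 2)) (Fs u) := by
  have hD := (summable_series c1_abs hu).hasSum
  have h := (hasSum_nat_add_iff' (f := fun n => c1 n * u ^ n) 2).mpr hD
  simp only [Finset.sum_range_succ, Finset.sum_range_zero, pow_zero, pow_one, zero_add] at h
  have hc0 : c1 0 = 0 := by simp [c1]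
  have hc1 : c1 1 = 0 := by simp [c1]
  rw [hc0, hc1] at h
  simpa [Fs] using h



noncomputable def Rf (t : ℝ) : ℝ :=
  (t / 2 - 1) * Real.log ((1 + Real.sqrt (1 + t)) / 2) - (1/2) * Real.sqrt (1 + t) + 1/2 + t / 2

noncomputable def R1 (t : ℝ) : ℝ :=
  (1/2) * Real.log ((1 + Real.sqrt (1 + t)) / 2)
    + (t / 2 - 1) / (2 * Real.sqrt (1 + t) * (1 + Real.sqrt (1 + t)))
    - 1 / (4 * Real.sqrt (1 + t)) + 1/2

noncomputable def R2 (t : ℝ) : ℝ :=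
  1 / (2 * Real.sqrt (1 + t) * (1 + Real.sqrt (1 + t)))
    - (t / 2 - 1) * (1 + 2 * Real.sqrt (1 + t)) /
        (4 * Real.sqrt (1 + t) ^ 3 * (1 + Real.sqrt (1 + t)) ^ 2)
    + 1 / (8 * Real.sqrt (1 + t) ^ 3)

section Rside
variable {t : ℝ} (ht : -1 < t)

lemma sqrt_pos' (ht : -1 < t) : 0 < Real.sqrt (1 + t) := Real.sqrt_pos.mpr (by linarith)

lemma hasDerivAt_S (ht : -1 < t) :
    HasDerivAt (fun y => Real.sqrt (1 + y)) (1 / (2 * Real.sqrt (1 + t))) t := by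
  have h0 : HasDerivAt (fun y : ℝ => 1 + y) 1 t := (hasDerivAt_id t).const_add 1
  have h := (Real.hasDerivAt_sqrt (show (1 : ℝ) + t ≠ 0 by linarith)).comp t h0
  exact h.congr_deriv (by simp)

lemma hasDerivAt_L (ht : -1 < t) :
    HasDerivAt (fun y => Real.log ((1 + Real.sqrt (1 + y)) / 2))
      (1 / (2 * Real.sqrt (1 + t) * (1 + Real.sqrt (1 + t)))) t := by
  have hS := sqrt_pos' ht
  have hinner : HasDerivAt (fun y => (1 + Real.sqrt (1 + y)) / 2)
      ((1 / (2 * Real.sqrt (1 + t))) / 2) t := ((hasDerivAt_S ht).const_add 1).div_const 2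
  have hne : (1 + Real.sqrt (1 + t)) / 2 ≠ 0 := by positivity
  have h := hinner.log hne
  convert h using 1
  field_simp

lemma hasDerivAt_Rf (ht : -1 < t) : HasDerivAt Rf (R1 t) t := by
  have hS := sqrt_pos' ht
  have h1 : HasDerivAt (fun y : ℝ => y / 2 - 1) (1/2) t :=
    ((hasDerivAt_id t).div_const 2).sub_const 1
  have hprod := h1.mul (hasDerivAt_L ht)
  have hhalf := (hasDerivAt_S ht).const_mul (1/2 : ℝ)
  have hlin : HasDerivAt (fun y : ℝ => y / 2) (1/2 : ℝ) t := (hasDerivAt_id t).div_const 2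
  have h := ((hprod.sub hhalf).add_const (1/2 : ℝ)).add hlin
  refine h.congr_deriv ?_
  rw [R1]
  field_simp
  ring

lemma hasDerivAt_R1 (ht : -1 < t) : HasDerivAt R1 (R2 t) t := by
  have hS := sqrt_pos' ht
  have h1S : (0 : ℝ) < 1 + Real.sqrt (1 + t) := by linarith
  have hA := (hasDerivAt_L ht).const_mul (1/2 : ℝ)
  have hnum : HasDerivAt (fun y : ℝ => y / 2 - 1) (1/2) t :=
    ((hasDerivAt_id t).div_const 2).sub_const 1
  have hP : HasDerivAt (fun y => 2 * Real.sqrt (1 + y) * (1 + Real.sqrt (1 + y)))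
      ((2 * (1 / (2 * Real.sqrt (1 + t)))) * (1 + Real.sqrt (1 + t))
        + (2 * Real.sqrt (1 + t)) * (1 / (2 * Real.sqrt (1 + t)))) t :=
    ((hasDerivAt_S ht).const_mul 2).mul ((hasDerivAt_S ht).const_add 1)
  have hPne : 2 * Real.sqrt (1 + t) * (1 + Real.sqrt (1 + t)) ≠ 0 := by positivity
  have hB := hnum.div hP hPne
  have hQ : HasDerivAt (fun y => 4 * Real.sqrt (1 + y)) (4 * (1 / (2 * Real.sqrt (1 + t)))) t :=
    (hasDerivAt_S ht).const_mul 4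
  have hQne : 4 * Real.sqrt (1 + t) ≠ 0 := by positivity
  have hC := (hasDerivAt_const t (1 : ℝ)).div hQ hQne
  have h := ((hA.add hB).sub hC).add_const (1/2 : ℝ)
  refine h.congr_deriv ?_
  rw [R2]
  field_simp
  ring

end Rside


lemma key_identity {t : ℝ} (ht : t ∈ Set.Ioo (-1 : ℝ) 1) : F2v (-t) = R2 t := by
  obtain ⟨ht1, ht2⟩ := ht
  rcases eq_or_ne t 0 with rfl | ht0
  · rw [show (-0 : ℝ) = 0 by ring, F2v_zero, R2]
    rw [show (1 : ℝ) + 0 = 1 by ring, Real.sqrt_one]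
    norm_num
  · have hu : |(-t : ℝ)| < 1 := by rw [abs_neg, abs_lt]; exact ⟨ht1, ht2⟩
    have hc := F2v_closed hu
    have hgS : gS (-t) = (Real.sqrt (1 + t))⁻¹ := by
      rw [gS_eq hu, show (1 : ℝ) - -t = 1 + t by ring]
    have hgD : gD (-t) = gS (-t) / (2 * (1 + t)) := by
      rw [gD_eq hu, show (1 : ℝ) - -t = 1 + t by ring]
    set S := Real.sqrt (1 + t) with hSdef
    have hS : 0 < S := sqrt_pos' ht1
    have h1S : (0 : ℝ) < 1 + S := by linarith
    have hS2 : S ^ 2 = 1 + t := Real.sq_sqrt (by linarith)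
    have hT : t = S ^ 2 - 1 := by rw [hS2]; ring
    have ht2' : (t : ℝ) ^ 2 ≠ 0 := pow_ne_zero 2 ht0
    apply mul_left_cancel₀ ht2'
    rw [hgD, hgS] at hc
    rw [show (-t : ℝ) ^ 2 = t ^ 2 by ring] at hc
    rw [hc, R2]
    have hSm1 : S ^ 2 - 1 ≠ 0 := by rw [← hT]; exact ht0
    rw [← hSdef]
    rw [hT]
    field_simp
    ring

lemma F1_eq_R1 {t : ℝ} (ht : t ∈ Set.Ioo (-1 : ℝ) 1) : -F1 (-t) = R1 t := by
  have key : ∀ y ∈ Set.Ioo (-1 : ℝ) 1, HasDerivAt (fun y => -F1 (-y) - R1 y) 0 y := by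
    intro y hy
    have hu : |(-y : ℝ)| < 1 := by rw [abs_neg, abs_lt]; exact ⟨hy.1, hy.2⟩
    have hneg : HasDerivAt (fun z : ℝ => -z) (-1) y := (hasDerivAt_id y).neg
    have h1 := ((hasDerivAt_F1 hu).comp y hneg).neg
    have h2 := hasDerivAt_R1 hy.1
    have h := h1.sub h2
    refine h.congr_deriv ?_
    rw [← key_identity hy]
    ring
  have := const_on key ht
  rw [show (-0 : ℝ) = 0 by ring, F1_zero] at this
  have hR10 : R1 0 = 0 := by
    rw [R1, show (1 : ℝ) + 0 = 1 by ring, Real.sqrt_one]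
    norm_num
  rw [hR10] at this
  linarith [this]

lemma Fs_eq_Rf {t : ℝ} (ht : t ∈ Set.Ioo (-1 : ℝ) 1) : Fs (-t) = Rf t := by
  have key : ∀ y ∈ Set.Ioo (-1 : ℝ) 1, HasDerivAt (fun y => Fs (-y) - Rf y) 0 y := by
    intro y hy
    have hu : |(-y : ℝ)| < 1 := by rw [abs_neg, abs_lt]; exact ⟨hy.1, hy.2⟩
    have hneg : HasDerivAt (fun z : ℝ => -z) (-1) y := (hasDerivAt_id y).neg
    have h1 := (hasDerivAt_Fs hu).comp y hneg
    have h2 := hasDerivAt_Rf hy.1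
    have h := h1.sub h2
    refine h.congr_deriv ?_
    rw [← F1_eq_R1 hy]
    ring
  have := const_on key ht
  rw [show (-0 : ℝ) = 0 by ring, Fs_zero] at this
  have hRf0 : Rf 0 = 0 := by
    rw [Rf, show (1 : ℝ) + 0 = 1 by ring, Real.sqrt_one]
    norm_num
  rw [hRf0] at this
  linarith [this]


lemma poch_eq (n : ℕ) : poch (1/2) n = gam n * (n.factorial : ℝ) := by
  induction n with
  | zero => simp [poch, gam_zero]
  | succ n ih =>
    rw [poch, Finset.prod_range_succ, ← poch, ih, Nat.factorial_succ]
    push_cast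
    linear_combination (-(n.factorial : ℝ)/2) * gam_rec n

lemma term_eq (x : ℝ) (j : ℕ) :
    poch (1/2) (j + 2) * (1/2 - ((j : ℝ) + 2)) /
        ((1 - ((j : ℝ) + 2)) * ((j : ℝ) + 2) * (Nat.factorial (j + 2) : ℝ)) * (-x) ^ (j + 2)
      = c1 (j + 2) * (-x) ^ (j + 2) := by
  congr 1
  rw [poch_eq, c1_add2]
  have h1 : ((j : ℝ) + 1) ≠ 0 := by positivity
  have h2 : ((j : ℝ) + 2) ≠ 0 := by positivity
  have h3 : ((Nat.factorial (j + 2) : ℝ)) ≠ 0 := by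
    exact_mod_cast Nat.factorial_ne_zero (j + 2)
  have h4 : (1 : ℝ) - ((j : ℝ) + 2) ≠ 0 := by
    intro h; have : (j : ℝ) ≥ 0 := Nat.cast_nonneg j; linarith
  push_cast
  field_simp
  ring

end Stmt14Aux

theorem stmt14 (x : ℝ) (hx0 : 0 < x) (hx1 : x < 1) :
    HasSum (fun j : ℕ =>
        poch (1/2) (j + 2) * (1/2 - ((j : ℝ) + 2)) /
          ((1 - ((j : ℝ) + 2)) * ((j : ℝ) + 2) * (Nat.factorial (j + 2) : ℝ)) * (-x) ^ (j + 2))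
      ((x / 2 - 1) * Real.log ((1 + Real.sqrt (1 + x)) / 2)
        - (1/2) * Real.sqrt (1 + x) + 1/2 + x / 2) := by
  have hx : x ∈ Set.Ioo (-1 : ℝ) 1 := ⟨by linarith, hx1⟩
  have hu : |(-x : ℝ)| < 1 := by rw [abs_neg, abs_lt]; exact ⟨hx.1, hx.2⟩
  have h := Stmt14Aux.hasSum_Fs_shift hu
  rw [Stmt14Aux.Fs_eq_Rf hx] at h
  have hfun : (fun j : ℕ =>
      poch (1/2) (j + 2) * (1/2 - ((j : ℝ) + 2)) /
        ((1 - ((j : ℝ) + 2)) * ((j : ℝ) + 2) * (Nat.factorial (j + 2) : ℝ)) * (-x) ^ (j + 2))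
      = fun j : ℕ => Stmt14Aux.c1 (j + 2) * (-x) ^ (j + 2) :=
    funext (Stmt14Aux.term_eq x)
  rw [hfun]
  exact h
end

section
/- For every λ with 0 < λ < 1 and every k with 0 < k < 1, one has F(λ,k) = K(k) − (1/2) · ∫₀^{(1−λ²)/(1−k²)} dt/√(t·(1+k²t)·(1−t+k²t)). -/
open Real MeasureTheory Set intervalIntegral

set_option maxHeartbeats 1000000 in
theorem stmt19 (l k : ℝ) (hl0 : 0 < l) (hl1 : l < 1) (hk0 : 0 < k) (hk1 : k < 1) :
    (∫ t in (0:ℝ)..l, 1 / Real.sqrt ((1 - t ^ 2) * (1 - k ^ 2 * t ^ 2)))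
      = (∫ t in (0:ℝ)..1, 1 / Real.sqrt ((1 - t ^ 2) * (1 - k ^ 2 * t ^ 2)))
        - (1/2) * ∫ t in (0:ℝ)..((1 - l ^ 2) / (1 - k ^ 2)),
            1 / Real.sqrt (t * (1 + k ^ 2 * t) * (1 - t + k ^ 2 * t)) := by
  have hk2 : (0:ℝ) < 1 - k ^ 2 := by nlinarith
  have hl2 : (0:ℝ) < 1 - l ^ 2 := by nlinarith
  set X : ℝ := (1 - l ^ 2) / (1 - k ^ 2) with hXdef
  have hXpos : 0 < X := div_pos hl2 hk2
  have hXk : (1 - k ^ 2) * X = 1 - l ^ 2 := by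
    rw [hXdef, mul_div_cancel₀ _ hk2.ne']
  set f : ℝ → ℝ := fun t => 1 / Real.sqrt ((1 - t ^ 2) * (1 - k ^ 2 * t ^ 2)) with hfdef
  set g : ℝ → ℝ := fun t => 1 / Real.sqrt (t * (1 + k ^ 2 * t) * (1 - t + k ^ 2 * t)) with hgdef
  have hmeasf : Measurable f := by
    apply Measurable.div measurable_const
    exact Real.continuous_sqrt.measurable.comp (by fun_prop)
  -- integrability of f on [0, l]
  have hint0 : IntervalIntegrable f volume 0 l := by
    apply ContinuousOn.intervalIntegrable
    apply ContinuousOn.div continuousOn_const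
    · exact (Real.continuous_sqrt.comp (by fun_prop)).continuousOn
    · intro t ht
      rw [Set.uIcc_of_le hl0.le] at ht
      obtain ⟨ht0, htl⟩ := ht
      have h1 : t ^ 2 ≤ l ^ 2 := by nlinarith
      have h2 : (0:ℝ) < 1 - t ^ 2 := by nlinarith
      have h3 : (0:ℝ) < 1 - k ^ 2 * t ^ 2 := by nlinarith
      exact (Real.sqrt_pos.mpr (mul_pos h2 h3)).ne'
  -- integrability of f on [l, 1]
  have hint1 : IntervalIntegrable f volume l 1 := by
    have hb : IntervalIntegrable (fun t => (1 / Real.sqrt (1 - k)) * ((1 - t) ^ (-(1/2) : ℝ)))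
        volume l 1 := by
      have h1 : IntervalIntegrable (fun x : ℝ => x ^ (-(1/2) : ℝ)) volume (1 - l) (1 - 1) :=
        intervalIntegral.intervalIntegrable_rpow' (by norm_num)
      have h2 := (h1.comp_sub_left 1).const_mul (1 / Real.sqrt (1 - k))
      simpa using h2
    apply hb.mono_fun hmeasf.aestronglyMeasurable
    apply Filter.eventually_of_mem (self_mem_ae_restrict measurableSet_uIoc)
    intro t ht
    rw [Set.uIoc_of_le hl1.le] at ht
    obtain ⟨htl, ht1⟩ := ht
    have ht0 : 0 < t := hl0.trans htl
    have h1k : (0:ℝ) < 1 - k := by linarith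
    have h1t : (0:ℝ) ≤ 1 - t := by linarith
    have hRHS : (1 / Real.sqrt (1 - k)) * ((1 - t) ^ (-(1/2) : ℝ))
        = 1 / Real.sqrt ((1 - k) * (1 - t)) := by
      rw [Real.rpow_neg h1t, ← Real.sqrt_eq_rpow, Real.sqrt_mul h1k.le, one_div, one_div,
        mul_inv]
    have hfnn : 0 ≤ f t := by positivity
    have hRnn : 0 ≤ (1 / Real.sqrt (1 - k)) * ((1 - t) ^ (-(1/2) : ℝ)) := by positivity
    show ‖f t‖ ≤ ‖(1 / Real.sqrt (1 - k)) * ((1 - t) ^ (-(1/2) : ℝ))‖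
    rw [Real.norm_of_nonneg hfnn, Real.norm_of_nonneg hRnn, hRHS]
    rcases eq_or_lt_of_le ht1 with h | h
    · have : f t = 0 := by
        simp [hfdef, h]
      rw [this]
      positivity
    · have hden : (0:ℝ) < (1 - k) * (1 - t) := by nlinarith
      have hkt : k * t < 1 := by nlinarith
      have hA : (0:ℝ) ≤ 1 - k ^ 2 * t ^ 2 := by nlinarith [mul_pos hk0 ht0]
      have hk2' : k ^ 2 ≤ k := by nlinarith
      have ht2 : t ^ 2 ≤ 1 := by nlinarith
      have hkt2 : k ^ 2 * t ^ 2 ≤ k ^ 2 := by nlinarith [sq_nonneg k]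
      have hB : (1:ℝ) - k ≤ (1 + t) * (1 - k ^ 2 * t ^ 2) := by
        nlinarith [mul_nonneg ht0.le hA]
      have hle : (1 - k) * (1 - t) ≤ (1 - t ^ 2) * (1 - k ^ 2 * t ^ 2) := by
        nlinarith [mul_le_mul_of_nonneg_left hB h1t]
      exact one_div_le_one_div_of_le (Real.sqrt_pos.mpr hden)
        (Real.sqrt_le_sqrt hle)
  -- the substitution map
  set φ : ℝ → ℝ := fun s => Real.sqrt (1 - (1 - k ^ 2) * s) with hφdef
  set φ' : ℝ → ℝ := fun s => 1 / (2 * Real.sqrt (1 - (1 - k ^ 2) * s)) * (-(1 - k ^ 2))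
    with hφ'def
  have hu : ∀ s ∈ Set.Ioo (0:ℝ) X, l ^ 2 < 1 - (1 - k ^ 2) * s ∧ 1 - (1 - k ^ 2) * s < 1 := by
    intro s hs
    obtain ⟨hs0, hsX⟩ := hs
    constructor
    · have : (1 - k ^ 2) * s < (1 - k ^ 2) * X := by
        exact mul_lt_mul_of_pos_left hsX hk2
      rw [hXk] at this
      linarith
    · nlinarith
  have hderiv : ∀ s ∈ Set.Ioo (0:ℝ) X, HasDerivWithinAt φ (φ' s) (Set.Ioo (0:ℝ) X) s := by
    intro s hs
    have hus := hu s hs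
    have hupos : (0:ℝ) < 1 - (1 - k ^ 2) * s := lt_trans (by positivity) hus.1
    have hlin : HasDerivAt (fun s : ℝ => 1 - (1 - k ^ 2) * s) (-(1 - k ^ 2)) s := by
      have h := (((hasDerivAt_id' (𝕜 := ℝ)) s).const_mul (1 - k ^ 2)).const_sub (1 : ℝ)
      simp only [mul_one] at h
      exact h
    exact ((Real.hasDerivAt_sqrt hupos.ne').comp s hlin).hasDerivWithinAt
  have hinj : Set.InjOn φ (Set.Ioo (0:ℝ) X) := by
    intro s₁ h₁ s₂ h₂ heq
    have h₁u := hu s₁ h₁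
    have h₂u := hu s₂ h₂
    have e : 1 - (1 - k ^ 2) * s₁ = 1 - (1 - k ^ 2) * s₂ := by
      rw [← Real.sqrt_inj (by nlinarith) (by nlinarith)]
      exact heq
    have := mul_left_cancel₀ hk2.ne' (by linarith : (1 - k ^ 2) * s₁ = (1 - k ^ 2) * s₂)
    linarith [this]
  have himg : φ '' Set.Ioo (0:ℝ) X = Set.Ioo l 1 := by
    ext y
    constructor
    · rintro ⟨s, hs, rfl⟩
      have hus := hu s hs
      constructor
      · have := Real.sqrt_lt_sqrt (by positivity) hus.1
        rwa [Real.sqrt_sq hl0.le] at this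
      · calc φ s < Real.sqrt 1 := Real.sqrt_lt_sqrt (by nlinarith) hus.2
          _ = 1 := Real.sqrt_one
    · rintro ⟨hyl, hy1⟩
      refine ⟨(1 - y ^ 2) / (1 - k ^ 2), ⟨?_, ?_⟩, ?_⟩
      · have : (0:ℝ) < 1 - y ^ 2 := by nlinarith
        positivity
      · rw [hXdef, div_lt_div_iff_of_pos_right hk2]
        nlinarith
      · show Real.sqrt (1 - (1 - k ^ 2) * ((1 - y ^ 2) / (1 - k ^ 2))) = y
        rw [mul_div_cancel₀ _ hk2.ne']
        have : 1 - (1 - y ^ 2) = y ^ 2 := by ring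
        rw [this, Real.sqrt_sq (by linarith)]
  -- change of variables
  have hsub : ∫ t in Set.Ioo l 1, f t = ∫ s in Set.Ioo (0:ℝ) X, |φ' s| • f (φ s) := by
    rw [← himg]
    exact integral_image_eq_integral_abs_deriv_smul measurableSet_Ioo hderiv hinj f
  have hpt : Set.EqOn (fun s => |φ' s| • f (φ s)) (fun s => (1/2) * g s) (Set.Ioo (0:ℝ) X) := by
    intro s hs
    obtain ⟨hu1, hu2⟩ := hu s hs
    obtain ⟨hs0, hsX⟩ := hs
    set u : ℝ := 1 - (1 - k ^ 2) * s with hudef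
    have hupos : 0 < u := lt_trans (by positivity) hu1
    have hsq : Real.sqrt u ^ 2 = u := Real.sq_sqrt hupos.le
    have hA : (0:ℝ) < s * (1 + k ^ 2 * s) := by positivity
    have h1 : (1 - φ s ^ 2) * (1 - k ^ 2 * φ s ^ 2)
        = (1 - k ^ 2) ^ 2 * (s * (1 + k ^ 2 * s)) := by
      show (1 - Real.sqrt u ^ 2) * (1 - k ^ 2 * Real.sqrt u ^ 2) = _
      rw [hsq, hudef]; ring
    have h2 : Real.sqrt ((1 - k ^ 2) ^ 2 * (s * (1 + k ^ 2 * s)))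
        = (1 - k ^ 2) * Real.sqrt (s * (1 + k ^ 2 * s)) := by
      rw [Real.sqrt_mul (sq_nonneg _), Real.sqrt_sq hk2.le]
    have hfφ : f (φ s) = 1 / ((1 - k ^ 2) * Real.sqrt (s * (1 + k ^ 2 * s))) := by
      rw [hfdef]
      show 1 / Real.sqrt ((1 - φ s ^ 2) * (1 - k ^ 2 * φ s ^ 2)) = _
      rw [h1, h2]
    have hgs : g s = 1 / (Real.sqrt (s * (1 + k ^ 2 * s)) * Real.sqrt u) := by
      rw [hgdef]
      show 1 / Real.sqrt (s * (1 + k ^ 2 * s) * (1 - s + k ^ 2 * s)) = _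
      have e : s * (1 + k ^ 2 * s) * (1 - s + k ^ 2 * s) = (s * (1 + k ^ 2 * s)) * u := by
        rw [hudef]; ring
      rw [e, Real.sqrt_mul hA.le]
    have habs : |φ' s| = (1 - k ^ 2) / (2 * Real.sqrt u) := by
      show |1 / (2 * Real.sqrt u) * (-(1 - k ^ 2))| = _
      rw [abs_mul, abs_neg, abs_of_nonneg hk2.le,
        abs_of_nonneg (by positivity : (0:ℝ) ≤ 1 / (2 * Real.sqrt u))]
      ring
    show |φ' s| • f (φ s) = (1/2) * g s
    rw [smul_eq_mul, habs, hfφ, hgs]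
    have hsu : Real.sqrt u ≠ 0 := (Real.sqrt_pos.mpr hupos).ne'
    have hsA : Real.sqrt (s * (1 + k ^ 2 * s)) ≠ 0 := (Real.sqrt_pos.mpr hA).ne'
    field_simp
  have hIoo : ∫ s in Set.Ioo (0:ℝ) X, |φ' s| • f (φ s)
      = (1/2) * ∫ s in Set.Ioo (0:ℝ) X, g s := by
    rw [MeasureTheory.setIntegral_congr_fun measurableSet_Ioo hpt]
    exact MeasureTheory.integral_const_mul _ _
  have e1 : ∫ t in l..1, f t = ∫ t in Set.Ioo l 1, f t := by
    rw [intervalIntegral.integral_of_le hl1.le, MeasureTheory.integral_Ioc_eq_integral_Ioo]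
  have e2 : ∫ s in (0:ℝ)..X, g s = ∫ s in Set.Ioo (0:ℝ) X, g s := by
    rw [intervalIntegral.integral_of_le hXpos.le, MeasureTheory.integral_Ioc_eq_integral_Ioo]
  have hsplit : (∫ t in (0:ℝ)..1, f t) = (∫ t in (0:ℝ)..l, f t) + ∫ t in l..1, f t :=
    (intervalIntegral.integral_add_adjacent_intervals hint0 hint1).symm
  have hfin : ∫ t in l..1, f t = (1/2) * ∫ s in (0:ℝ)..X, g s := by
    rw [e1, e2, hsub, hIoo]
  rw [hsplit, hfin]
  ring
end
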